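/- (Bernstein–Szegő density martingale.) Let β > 0 and let (α_j)_{j≥0} be a CβE(β) Verblunsky sequence, with Φ_n* defined by the Szegő recursion. Fix θ ∈ ℝ. Then the process X_n := Π_{j=0}^{n−1} (1 − |α_j|²) / |Φ_n*(e^{iθ})|² (which is well defined since Φ_n* has no zeros on the closed unit disc) is a martingale with respect to the filtration (F_n): for every n, E[X_{n+1} | F_n] = X_n almost surely; in particular E[X_n] = 1 for all n. -/

import Mathlib

open MeasureTheory ProbabilityTheory

/-- The law on `ℂ` with density `w ↦ (b/π)(1-|w|²)^{b-1} 1_{|w|<1}` with respect to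
planar Lebesgue measure. -/
noncomputable def verblunskyLaw (b : ℝ) : Measure ℂ :=
  volume.withDensity fun w =>
    ENNReal.ofReal (if ‖w‖ < 1 then (b / Real.pi) * (1 - ‖w‖ ^ 2) ^ (b - 1) else 0)

/-- `(α_j)_{j≥0}` is a CβE(β) Verblunsky sequence. -/
def IsCbetaE {Ω : Type*} [MeasurableSpace Ω] (P : Measure Ω) (β : ℝ) (α : ℕ → Ω → ℂ) : Prop :=
  (∀ j, Measurable (α j)) ∧
  iIndepFun α P ∧
  ∀ j : ℕ, P.map (α j) = verblunskyLaw (β * ((j : ℝ) + 1) / 2)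

/-- Szegő recursion: `szego α n z = (Φ_n(z), Φ_n*(z))`. -/
noncomputable def szego (α : ℕ → ℂ) : ℕ → ℂ → ℂ × ℂ
  | 0, _ => (1, 1)
  | (k + 1), z =>
      (z * (szego α k z).1 - (starRingEnd ℂ) (α k) * (szego α k z).2,
       (szego α k z).2 - α k * z * (szego α k z).1)

noncomputable def szegoPhiStar (α : ℕ → ℂ) (n : ℕ) (z : ℂ) : ℂ := (szego α n z).2

section CbeAux

open Set intervalIntegral Real ProbabilityTheory



lemma refl_integrable {c : ℝ} (hc : -1 < c) (a b : ℝ) :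
    IntervalIntegrable (fun x : ℝ => (1 - x) ^ c) volume a b := by
  have h := intervalIntegral.intervalIntegrable_rpow' (a := 1 - a) (b := 1 - b) hc
  simpa using h.comp_sub_left 1

lemma radial_integrable {b : ℝ} (hb : 0 < b) :
    IntervalIntegrable (fun r : ℝ => 2 * b * r * (1 - r ^ 2) ^ (b - 1)) volume 0 1 := by
  set C : ℝ := 2 * b * max 1 (2 ^ (b - 1)) with hC
  have hdom : IntervalIntegrable (fun x : ℝ => C * (1 - x) ^ (b - 1)) volume 0 1 :=
    (refl_integrable (by linarith) 0 1).const_mul C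
  refine hdom.mono_fun ?_ ?_
  · exact ((measurable_const.mul measurable_id).mul
      ((measurable_const.sub (measurable_id.pow_const 2)).pow measurable_const)).aestronglyMeasurable
  · rw [Filter.EventuallyLE, ae_restrict_iff' measurableSet_uIoc]
    refine Filter.Eventually.of_forall fun x hx => ?_
    rw [Set.uIoc_of_le (by norm_num : (0:ℝ) ≤ 1)] at hx
    obtain ⟨hx0, hx1⟩ := hx
    have h1x : (0:ℝ) ≤ 1 - x := by linarith
    have h2x : (0:ℝ) ≤ 1 - x ^ 2 := by nlinarith
    have hsplit : (1 - x ^ 2 : ℝ) = (1 - x) * (1 + x) := by ring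
    have hmul : (1 - x ^ 2 : ℝ) ^ (b - 1) = (1 - x) ^ (b - 1) * (1 + x) ^ (b - 1) := by
      rw [hsplit, Real.mul_rpow h1x (by linarith)]
    have hbound : (1 + x : ℝ) ^ (b - 1) ≤ max 1 (2 ^ (b - 1)) := by
      rcases le_or_gt 1 b with hb1 | hb1
      · exact le_max_of_le_right (Real.rpow_le_rpow (by linarith) (by linarith) (by linarith))
      · exact le_max_of_le_left (Real.rpow_le_one_of_one_le_of_nonpos (by linarith) (by linarith))
    have hnn : (0:ℝ) ≤ (1 - x) ^ (b - 1) := Real.rpow_nonneg h1x _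
    have hnn2 : (0:ℝ) ≤ (1 - x ^ 2) ^ (b - 1) := Real.rpow_nonneg h2x _
    simp only [Real.norm_eq_abs]
    have e1 : (0:ℝ) ≤ 2 * b * x * (1 - x ^ 2) ^ (b - 1) :=
      mul_nonneg (mul_nonneg (by linarith) hx0.le) hnn2
    rw [abs_of_nonneg e1, abs_of_nonneg (by positivity)]
    have hE : (0:ℝ) ≤ (1-x)^(b-1) * (1+x)^(b-1) :=
      mul_nonneg hnn (Real.rpow_nonneg (by linarith) _)
    calc 2 * b * x * (1 - x ^ 2) ^ (b - 1)
        ≤ 2 * b * 1 * ((1 - x) ^ (b - 1) * (1 + x) ^ (b - 1)) := by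
          rw [hmul, mul_assoc, mul_assoc, mul_assoc, mul_assoc]
          refine mul_le_mul_of_nonneg_left ?_ (by norm_num)
          refine mul_le_mul_of_nonneg_left ?_ hb.le
          rw [one_mul]
          exact mul_le_of_le_one_left hE hx1
      _ ≤ 2 * b * 1 * ((1 - x) ^ (b - 1) * max 1 (2 ^ (b - 1))) := by gcongr
      _ = C * (1 - x) ^ (b - 1) := by rw [hC]; ring

lemma radial_integral {b : ℝ} (hb : 0 < b) :
    ∫ r in (0:ℝ)..1, 2 * b * r * (1 - r ^ 2) ^ (b - 1) = 1 := by
  have key : (∫ x in (0:ℝ)..1, (fun x => 2 * x) x • ((fun u : ℝ => b * (1 - u) ^ (b - 1)) ∘ (fun x => x ^ 2)) x)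
      = ∫ u in ((fun x : ℝ => x ^ 2) 0)..((fun x : ℝ => x ^ 2) 1), b * (1 - u) ^ (b - 1) := by
    apply intervalIntegral.integral_comp_smul_deriv''' (f := fun x => x ^ 2) (f' := fun x => 2 * x)
      (g := fun u : ℝ => b * (1 - u) ^ (b - 1))
    · exact (continuous_pow 2).continuousOn
    · intro x hx
      have h := (hasDerivAt_pow 2 x).hasDerivWithinAt (s := Set.Ioi x)
      convert h using 1
      case e'_9 => norm_num
      all_goals rfl
    · have hcont : ContinuousOn (fun u : ℝ => b * (1 - u) ^ (b - 1)) (Set.Ioo 0 1) := by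
        refine continuousOn_const.mul (ContinuousOn.rpow_const
          (continuousOn_const.sub continuousOn_id) fun u hu => Or.inl ?_)
        simp only [Set.mem_Ioo] at hu
        intro h'
        nlinarith [hu.2]
      refine hcont.mono ?_
      intro y hy
      simp only [Set.mem_image, Set.mem_Ioo] at hy
      obtain ⟨x, hx, rfl⟩ := hy
      simp only [min_def, max_def] at hx
      norm_num at hx
      constructor <;> nlinarith [hx.1, hx.2]
    · -- IntegrableOn g ((·^2) '' [[0,1]])
      have himg : ((fun x : ℝ => x ^ 2) '' Set.uIcc 0 1) ⊆ Set.Icc 0 1 := by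
        intro y hy
        obtain ⟨x, hx, rfl⟩ := hy
        rw [Set.uIcc_of_le (by norm_num : (0:ℝ) ≤ 1)] at hx
        refine ⟨by positivity, ?_⟩
        show x ^ 2 ≤ 1
        nlinarith [hx.1, hx.2]
      have : IntegrableOn (fun u : ℝ => b * (1 - u) ^ (b - 1)) (Set.Icc 0 1) := by
        have h := ((refl_integrable (by linarith : (-1:ℝ) < b - 1) 0 1).const_mul b)
        rw [intervalIntegrable_iff_integrableOn_Icc_of_le (by norm_num : (0:ℝ) ≤ 1)] at h
        exact h
      exact this.mono_set himg
    · -- IntegrableOn x ↦ 2x • g(x²) on [[0,1]]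
      have h := radial_integrable hb
      rw [intervalIntegrable_iff_integrableOn_Icc_of_le (by norm_num : (0:ℝ) ≤ 1)] at h
      rw [Set.uIcc_of_le (by norm_num : (0:ℝ) ≤ 1)]
      refine h.congr_fun (fun x _ => ?_) measurableSet_Icc
      simp only [Function.comp_apply, smul_eq_mul]
      ring
  simp only [Function.comp_apply, smul_eq_mul] at key
  have e : (∫ r in (0:ℝ)..1, 2 * b * r * (1 - r ^ 2) ^ (b - 1))
      = ∫ x in (0:ℝ)..1, 2 * x * (b * (1 - x ^ 2) ^ (b - 1)) :=
    intervalIntegral.integral_congr fun x _ => by ring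
  rw [e, key]
  norm_num
  have e2 : (∫ u in (0:ℝ)..1, b * (1 - u) ^ (b - 1)) = b * ∫ u in (0:ℝ)..1, (1 - u) ^ (b - 1) :=
    intervalIntegral.integral_const_mul _ _
  have e3 : (∫ u in (0:ℝ)..1, (1 - u) ^ (b - 1)) = ∫ x in (0:ℝ)..1, x ^ (b - 1) := by
    have := intervalIntegral.integral_comp_sub_left (a := (0:ℝ)) (b := 1)
      (fun v : ℝ => v ^ (b - 1)) 1
    simpa using this
  have e4 : (∫ x in (0:ℝ)..1, x ^ (b - 1)) = 1 / b := by
    rw [integral_rpow (Or.inl (by linarith))]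
    rw [Real.one_rpow, Real.zero_rpow (by linarith : b - 1 + 1 ≠ 0)]
    norm_num
  rw [e3, e4]
  field_simp


lemma re_moebius (u : ℂ) (hu : (1 : ℂ) - u ≠ 0) :
    (((1 : ℂ) + u) / (1 - u)).re = (1 - ‖u‖ ^ 2) / ‖1 - u‖ ^ 2 := by
  have h2 : ‖(1:ℂ) - u‖ ^ 2 = Complex.normSq (1 - u) := by
    rw [Complex.sq_norm]
  have h3 : ‖u‖ ^ 2 = Complex.normSq u := by rw [Complex.sq_norm]
  rw [Complex.div_re, h2, h3]
  have : ((1:ℂ) + u).re * ((1:ℂ) - u).re + ((1:ℂ) + u).im * ((1:ℂ) - u).im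
      = 1 - Complex.normSq u := by
    simp [Complex.normSq_apply]
    ring
  rw [← add_div, this]

lemma circle_avg (q : ℂ) (hq : ‖q‖ = 1) {r : ℝ} (h0 : 0 < r) (h1 : r < 1) :
    ∫ θ in (0:ℝ)..(2 * π), ((1 : ℂ) + circleMap 0 r θ * q) / (1 - circleMap 0 r θ * q)
      = 2 * π := by
  set f : ℂ → ℂ := fun ζ => (1 + ζ * q) / (1 - ζ * q) with hf
  have hne : ∀ ζ : ℂ, ‖ζ‖ ≤ r → (1 : ℂ) - ζ * q ≠ 0 := by
    intro ζ hζ h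
    have : ‖(1:ℂ)‖ = ‖ζ * q‖ := by
      rw [sub_eq_zero] at h; rw [h]
    rw [norm_one, norm_mul, hq, mul_one] at this
    linarith [hζ, this]
  have hdiff : DiffContOnCl ℂ f (Metric.ball 0 r) := by
    apply DifferentiableOn.diffContOnCl
    rw [closure_ball (0:ℂ) (ne_of_gt h0)]
    intro ζ hζ
    rw [Metric.mem_closedBall, dist_zero_right] at hζ
    exact (DifferentiableAt.div (c := fun ζ : ℂ => 1 + ζ * q) (d := fun ζ : ℂ => 1 - ζ * q)
      ((differentiableAt_const _).add (differentiableAt_id.mul_const q))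
      (((differentiableAt_const _)).sub (differentiableAt_id.mul_const q))
      (hne ζ hζ)).differentiableWithinAt
  have key := hdiff.circleIntegral_sub_inv_smul (w := 0) (Metric.mem_ball_self h0)
  have hf0 : f 0 = 1 := by simp [hf]
  rw [hf0, smul_eq_mul, mul_one] at key
  rw [circleIntegral] at key
  simp only [deriv_circleMap, smul_eq_mul, sub_zero] at key
  have e1 : ∀ θ : ℝ, circleMap 0 r θ * Complex.I * ((circleMap 0 r θ)⁻¹ * f (circleMap 0 r θ))
      = Complex.I * f (circleMap 0 r θ) := by
    intro θ
    have hne0 : circleMap 0 r θ ≠ 0 := by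
      simp [circleMap_ne_center (ne_of_gt h0)]
    field_simp
  rw [intervalIntegral.integral_congr (fun θ _ => e1 θ)] at key
  rw [intervalIntegral.integral_const_mul] at key
  have key2 : Complex.I * ∫ (x : ℝ) in (0:ℝ)..2 * π, f (circleMap 0 r x)
      = Complex.I * (2 * ↑π) := by rw [key]; ring
  exact mul_left_cancel₀ Complex.I_ne_zero key2

lemma poisson (q : ℂ) (hq : ‖q‖ = 1) {r : ℝ} (h0 : 0 < r) (h1 : r < 1) :
    ∫ φ in Ioo (-π) π, (1 - r ^ 2) / ‖(1:ℂ) - (Complex.polarCoord.symm (r, φ)) * q‖ ^ 2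
      = 2 * π := by
  have hsymm : ∀ φ : ℝ, Complex.polarCoord.symm (r, φ) = circleMap 0 r φ := by
    intro φ
    rw [Complex.polarCoord_symm_apply]
    simp [circleMap, Complex.exp_mul_I, ← Complex.ofReal_cos, ← Complex.ofReal_sin]
  have hne : ∀ θ : ℝ, (1 : ℂ) - circleMap 0 r θ * q ≠ 0 := by
    intro θ h
    have : ‖(1:ℂ)‖ = ‖circleMap 0 r θ * q‖ := by rw [sub_eq_zero] at h; rw [h]
    rw [norm_one, norm_mul, hq, mul_one, norm_circleMap_zero,
      abs_of_pos h0] at this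
    linarith
  have hre : ∀ θ : ℝ, (((1 : ℂ) + circleMap 0 r θ * q) / (1 - circleMap 0 r θ * q)).re
      = (1 - r ^ 2) / ‖(1:ℂ) - circleMap 0 r θ * q‖ ^ 2 := by
    intro θ
    rw [re_moebius _ (hne θ)]
    congr 2
    rw [norm_mul, hq, mul_one, norm_circleMap_zero, abs_of_pos h0]
  have hcont : Continuous fun θ : ℝ => ((1 : ℂ) + circleMap 0 r θ * q) / (1 - circleMap 0 r θ * q) :=
    ((continuous_const.add ((continuous_circleMap 0 r).mul continuous_const)).div
      (continuous_const.sub ((continuous_circleMap 0 r).mul continuous_const)) hne)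
  have hint : IntervalIntegrable
      (fun θ : ℝ => ((1 : ℂ) + circleMap 0 r θ * q) / (1 - circleMap 0 r θ * q)) volume 0 (2*π) :=
    hcont.intervalIntegrable _ _
  have hrei : ∫ θ in (0:ℝ)..(2*π), (1 - r ^ 2) / ‖(1:ℂ) - circleMap 0 r θ * q‖ ^ 2 = 2 * π := by
    have := Complex.reCLM.intervalIntegral_comp_comm hint
    rw [circle_avg q hq h0 h1] at this
    have h2 : (Complex.reCLM (2 * (π:ℝ) : ℂ) : ℝ) = 2 * π := by simp
    rw [← intervalIntegral.integral_congr (fun θ _ => (hre θ))]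
    calc ∫ θ in (0:ℝ)..(2*π), (((1 : ℂ) + circleMap 0 r θ * q) / (1 - circleMap 0 r θ * q)).re
        = Complex.reCLM (2 * (π:ℝ) : ℂ) := by
          rw [← this]; norm_cast
      _ = 2 * π := h2
  have hper : Function.Periodic
      (fun θ : ℝ => (1 - r ^ 2) / ‖(1:ℂ) - circleMap 0 r θ * q‖ ^ 2) (2 * π) := by
    intro θ
    simp only [periodic_circleMap 0 r θ]
  have hshift := hper.intervalIntegral_add_eq (-π) 0
  rw [zero_add] at hshift
  have hpi : -π + 2 * π = π := by ring
  rw [hpi] at hshift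
  have : ∫ φ in Ioo (-π) π, (1 - r ^ 2) / ‖(1:ℂ) - (circleMap 0 r φ) * q‖ ^ 2 = 2 * π := by
    rw [← MeasureTheory.integral_Ioc_eq_integral_Ioo,
      ← intervalIntegral.integral_of_le (by linarith [pi_pos] : -π ≤ π), hshift, hrei]
  rw [← this]
  apply MeasureTheory.setIntegral_congr_fun measurableSet_Ioo
  intro φ _
  simp only []
  rw [hsymm φ]


lemma lintegral_comp_polarCoord_symm_real (g : ℝ × ℝ → ENNReal) :
    ∫⁻ p in polarCoord.target, ENNReal.ofReal p.1 * g (polarCoord.symm p) = ∫⁻ p, g p := by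
  set B : ℝ × ℝ → ℝ × ℝ →L[ℝ] ℝ × ℝ := fun p =>
    LinearMap.toContinuousLinearMap (Matrix.toLin (Module.Basis.finTwoProd ℝ) (Module.Basis.finTwoProd ℝ)
      !![Real.cos p.2, -p.1 * Real.sin p.2; Real.sin p.2, p.1 * Real.cos p.2]) with hB
  have A : ∀ p ∈ polarCoord.target, HasFDerivWithinAt polarCoord.symm (B p) polarCoord.target p :=
    fun p _ => (hasFDerivAt_polarCoord_symm p).hasFDerivWithinAt
  have B_det : ∀ p, (B p).det = p.1 := by
    intro p
    conv_rhs => rw [← one_mul p.1, ← cos_sq_add_sin_sq p.2]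
    simp only [hB, neg_mul, LinearMap.det_toContinuousLinearMap, LinearMap.det_toLin,
      Matrix.det_fin_two_of, sub_neg_eq_add]
    ring
  have hinj : InjOn polarCoord.symm polarCoord.target := polarCoord.symm.injOn
  have himg : polarCoord.symm '' polarCoord.target = polarCoord.source :=
    polarCoord.symm_image_target_eq_source
  have key := lintegral_image_eq_lintegral_abs_det_fderiv_mul volume
    polarCoord.open_target.measurableSet A hinj g
  rw [himg] at key
  have hsrc : ∫⁻ p in polarCoord.source, g p = ∫⁻ p, g p :=
    (setLIntegral_congr polarCoord_source_ae_eq_univ).trans (setLIntegral_univ g)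
  rw [hsrc] at key
  rw [key]
  apply setLIntegral_congr_fun_ae polarCoord.open_target.measurableSet
  exact Filter.Eventually.of_forall fun p hp => by
    rw [B_det, abs_of_pos hp.1]

lemma Complex.lintegral_comp_polarCoord_symm' (g : ℂ → ENNReal) (hg : Measurable g) :
    ∫⁻ p in Complex.polarCoord.target, ENNReal.ofReal p.1 * g (Complex.polarCoord.symm p)
      = ∫⁻ z, g z := by
  rw [← (Complex.volume_preserving_equiv_real_prod.symm).lintegral_comp hg,
    ← lintegral_comp_polarCoord_symm_real]
  rfl


lemma verblunsky_density_measurable (b : ℝ) :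
    Measurable fun w : ℂ =>
      ENNReal.ofReal (if ‖w‖ < 1 then (b / Real.pi) * (1 - ‖w‖ ^ 2) ^ (b - 1) else 0) := by
  apply Measurable.ennreal_ofReal
  apply Measurable.ite (measurableSet_lt measurable_norm measurable_const)
  · exact measurable_const.mul
      ((measurable_const.sub (measurable_norm.pow_const 2)).pow measurable_const)
  · exact measurable_const

lemma verblunsky_lintegral {b : ℝ} (hb : 0 < b) {q : ℂ} (hq : ‖q‖ = 1) :
    ∫⁻ a, ENNReal.ofReal ((1 - ‖a‖ ^ 2) / ‖(1:ℂ) - a * q‖ ^ 2) ∂(verblunskyLaw b) = 1 := by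
  have hmg : Measurable fun a : ℂ => ENNReal.ofReal ((1 - ‖a‖ ^ 2) / ‖(1:ℂ) - a * q‖ ^ 2) := by
    apply Measurable.ennreal_ofReal
    exact (measurable_const.sub (measurable_norm.pow_const 2)).div
      (((measurable_const.sub (measurable_id.mul_const q)).norm).pow_const 2)
  rw [verblunskyLaw, lintegral_withDensity_eq_lintegral_mul _ (verblunsky_density_measurable b) hmg]
  -- combine into single ofReal
  set h : ℂ → ℝ := fun w => if ‖w‖ < 1 then
      (b / Real.pi) * (1 - ‖w‖ ^ 2) ^ (b - 1) * ((1 - ‖w‖ ^ 2) / ‖(1:ℂ) - w * q‖ ^ 2) else 0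
    with hh
  have hcomb : ∀ w : ℂ,
      (ENNReal.ofReal (if ‖w‖ < 1 then (b / Real.pi) * (1 - ‖w‖ ^ 2) ^ (b - 1) else 0))
        * ENNReal.ofReal ((1 - ‖w‖ ^ 2) / ‖(1:ℂ) - w * q‖ ^ 2) = ENNReal.ofReal (h w) := by
    intro w
    by_cases hw : ‖w‖ < 1
    · rw [hh]
      simp only [hw, if_true]
      rw [← ENNReal.ofReal_mul]
      have hw2 : (0:ℝ) ≤ 1 - ‖w‖ ^ 2 := by nlinarith [norm_nonneg w]
      exact mul_nonneg (div_nonneg hb.le Real.pi_pos.le) (Real.rpow_nonneg hw2 _)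
    · rw [hh]
      simp only [hw, if_false, ENNReal.ofReal_zero, zero_mul]
  have hmh : Measurable fun w : ℂ => ENNReal.ofReal (h w) := by
    apply Measurable.ennreal_ofReal
    apply Measurable.ite (measurableSet_lt measurable_norm measurable_const) _ measurable_const
    exact (measurable_const.mul
      ((measurable_const.sub (measurable_norm.pow_const 2)).pow measurable_const)).mul
      ((measurable_const.sub (measurable_norm.pow_const 2)).div
        (((measurable_const.sub (measurable_id.mul_const q)).norm).pow_const 2))
  calc ∫⁻ w, (fun w => (ENNReal.ofReal (if ‖w‖ < 1 then (b / Real.pi) * (1 - ‖w‖ ^ 2) ^ (b - 1) else 0))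
          * ENNReal.ofReal ((1 - ‖w‖ ^ 2) / ‖(1:ℂ) - w * q‖ ^ 2)) w
      = ∫⁻ w, ENNReal.ofReal (h w) := lintegral_congr fun w => hcomb w
    _ = ∫⁻ p in Complex.polarCoord.target,
          ENNReal.ofReal p.1 * ENNReal.ofReal (h (Complex.polarCoord.symm p)) :=
        (Complex.lintegral_comp_polarCoord_symm' _ hmh).symm
    _ = 1 := by
        have hmsymm : Measurable fun p : ℝ × ℝ => (Complex.polarCoord.symm p : ℂ) := by
          have : (fun p : ℝ × ℝ => (Complex.polarCoord.symm p : ℂ))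
              = fun p : ℝ × ℝ => (p.1 : ℂ) * (↑(Real.cos p.2) + ↑(Real.sin p.2) * Complex.I) :=
            funext fun p => Complex.polarCoord_symm_apply p
          rw [this]
          exact ((Complex.continuous_ofReal.comp continuous_fst).mul
            (((Complex.continuous_ofReal.comp (Real.continuous_cos.comp continuous_snd)).add
            ((Complex.continuous_ofReal.comp (Real.continuous_sin.comp continuous_snd)).mul
              continuous_const)))).measurable
        have hmF : Measurable fun p : ℝ × ℝ =>
            ENNReal.ofReal p.1 * ENNReal.ofReal (h (Complex.polarCoord.symm p)) :=
          (measurable_fst.ennreal_ofReal).mul (hmh.comp hmsymm)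
        rw [Complex.polarCoord_target, Measure.volume_eq_prod, ← Measure.prod_restrict]
        rw [lintegral_prod _ hmF.aemeasurable]
        have inner : ∀ r ∈ Ioi (0:ℝ),
            (∫⁻ φ in Ioo (-π) π,
              ENNReal.ofReal r * ENNReal.ofReal (h (Complex.polarCoord.symm (r, φ))))
            = Set.indicator (Ioo (0:ℝ) 1)
                (fun r => ENNReal.ofReal (2 * b * r * (1 - r ^ 2) ^ (b - 1))) r := by
          intro r hr
          rw [mem_Ioi] at hr
          have habs : ∀ φ : ℝ, ‖(Complex.polarCoord.symm (r, φ) : ℂ)‖ = r := by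
            intro φ
            rw [Complex.norm_polarCoord_symm, abs_of_pos hr]
          by_cases hr1 : r < 1
          · -- main case
            have hnz : ∀ φ : ℝ, ((1:ℂ) - Complex.polarCoord.symm (r, φ) * q) ≠ 0 := by
              intro φ hzero
              have : ‖(1:ℂ)‖ = ‖(Complex.polarCoord.symm (r, φ) : ℂ) * q‖ := by
                rw [sub_eq_zero] at hzero; rw [hzero]
              rw [norm_one, norm_mul, hq, mul_one, habs] at this
              linarith
            have hval : ∀ φ : ℝ,
                ENNReal.ofReal r * ENNReal.ofReal (h (Complex.polarCoord.symm (r, φ)))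
                = ENNReal.ofReal (r * ((b / Real.pi) * (1 - r ^ 2) ^ (b - 1)))
                  * ENNReal.ofReal ((1 - r ^ 2) / ‖(1:ℂ) - Complex.polarCoord.symm (r, φ) * q‖ ^ 2) := by
              intro φ
              rw [hh]
              simp only [habs φ, hr1, if_true]
              have h2 : (0:ℝ) ≤ 1 - r ^ 2 := by nlinarith
              have hA : (0:ℝ) ≤ b / Real.pi * (1 - r ^ 2) ^ (b - 1) :=
                mul_nonneg (div_nonneg hb.le Real.pi_pos.le) (Real.rpow_nonneg h2 _)
              rw [ENNReal.ofReal_mul hA, ENNReal.ofReal_mul hr.le]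
              ring
            rw [lintegral_congr fun φ => hval φ]
            have hmg2 : Measurable fun φ : ℝ =>
                ENNReal.ofReal ((1 - r ^ 2) / ‖(1:ℂ) - Complex.polarCoord.symm (r, φ) * q‖ ^ 2) := by
              apply Measurable.ennreal_ofReal
              exact measurable_const.div
                ((((measurable_const.sub ((hmsymm.comp (measurable_const.prodMk measurable_id)).mul_const q)).norm).pow_const 2))
            rw [lintegral_const_mul _ hmg2]
            have hcontP : Continuous fun φ : ℝ =>
                (1 - r ^ 2) / ‖(1:ℂ) - Complex.polarCoord.symm (r, φ) * q‖ ^ 2 := by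
              have hcsym : Continuous fun φ : ℝ => (Complex.polarCoord.symm (r, φ) : ℂ) := by
                have : (fun φ : ℝ => (Complex.polarCoord.symm (r, φ) : ℂ))
                    = fun φ : ℝ => (r : ℂ) * (↑(Real.cos φ) + ↑(Real.sin φ) * Complex.I) :=
                  funext fun φ => Complex.polarCoord_symm_apply (r, φ)
                rw [this]
                exact continuous_const.mul
                  ((Complex.continuous_ofReal.comp Real.continuous_cos).add
                    ((Complex.continuous_ofReal.comp Real.continuous_sin).mul continuous_const))
              apply continuous_const.div
              · exact ((continuous_const.sub (hcsym.mul continuous_const)).norm).pow 2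
              · intro φ
                exact pow_ne_zero 2 (norm_ne_zero_iff.mpr (hnz φ))
            have hintP : IntegrableOn (fun φ : ℝ =>
                (1 - r ^ 2) / ‖(1:ℂ) - Complex.polarCoord.symm (r, φ) * q‖ ^ 2) (Ioo (-π) π) :=
              (hcontP.integrableOn_Icc).mono_set Ioo_subset_Icc_self
            have hposP : 0 ≤ᵐ[volume.restrict (Ioo (-π) π)] fun φ : ℝ =>
                (1 - r ^ 2) / ‖(1:ℂ) - Complex.polarCoord.symm (r, φ) * q‖ ^ 2 :=
              Filter.Eventually.of_forall fun φ => div_nonneg (by nlinarith) (by positivity)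
            rw [← ofReal_integral_eq_lintegral_ofReal hintP hposP]
            rw [poisson q hq hr hr1]
            rw [← ENNReal.ofReal_mul (by
              have h2 : (0:ℝ) ≤ 1 - r ^ 2 := by nlinarith
              exact mul_nonneg hr.le (mul_nonneg (div_nonneg hb.le Real.pi_pos.le)
                (Real.rpow_nonneg h2 _)))]
            rw [Set.indicator_of_mem (mem_Ioo.mpr ⟨hr, hr1⟩)]
            congr 1
            field_simp
          · -- r ≥ 1 : everything vanishes
            have hval0 : ∀ φ : ℝ, h (Complex.polarCoord.symm (r, φ)) = 0 := by
              intro φ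
              rw [hh]
              simp only [habs φ, hr1, if_false]
            simp only [hval0, ENNReal.ofReal_zero, mul_zero, lintegral_zero]
            rw [Set.indicator_of_notMem (fun hmem => hr1 (mem_Ioo.mp hmem).2)]
        rw [setLIntegral_congr_fun_ae measurableSet_Ioi (Filter.Eventually.of_forall inner)]
        rw [lintegral_indicator measurableSet_Ioo, Measure.restrict_restrict measurableSet_Ioo]
        have hIoo : Ioo (0:ℝ) 1 ∩ Ioi 0 = Ioo 0 1 := by
          apply inter_eq_left.mpr
          intro x hx
          exact hx.1
        rw [hIoo]
        have hint2 : IntegrableOn (fun r : ℝ => 2 * b * r * (1 - r ^ 2) ^ (b - 1)) (Ioo 0 1) := by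
          have h := radial_integrable hb
          rw [intervalIntegrable_iff_integrableOn_Icc_of_le (by norm_num : (0:ℝ) ≤ 1)] at h
          exact h.mono_set Ioo_subset_Icc_self
        have hpos2 : 0 ≤ᵐ[volume.restrict (Ioo (0:ℝ) 1)] fun r : ℝ =>
            2 * b * r * (1 - r ^ 2) ^ (b - 1) := by
          rw [Filter.EventuallyLE, ae_restrict_iff' measurableSet_Ioo]
          refine Filter.Eventually.of_forall fun x hx => ?_
          have h2 : (0:ℝ) ≤ 1 - x ^ 2 := by nlinarith [hx.1, hx.2]
          exact mul_nonneg (mul_nonneg (by linarith) hx.1.le) (Real.rpow_nonneg h2 _)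
        rw [← ofReal_integral_eq_lintegral_ofReal hint2 hpos2]
        have : ∫ r in Ioo (0:ℝ) 1, 2 * b * r * (1 - r ^ 2) ^ (b - 1) = 1 := by
          rw [← MeasureTheory.integral_Ioc_eq_integral_Ioo,
            ← intervalIntegral.integral_of_le (by norm_num : (0:ℝ) ≤ 1)]
          exact radial_integral hb
        rw [this, ENNReal.ofReal_one]




lemma szego_congr {a a' : ℕ → ℂ} {n : ℕ} (h : ∀ j < n, a j = a' j) (z : ℂ) :
    szego a n z = szego a' n z := by
  induction n with
  | zero => rfl
  | succ k ih =>
    have hk := ih (fun j hj => h j (Nat.lt_succ_of_lt hj))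
    show ((z * (szego a k z).1 - (starRingEnd ℂ) (a k) * (szego a k z).2,
       (szego a k z).2 - a k * z * (szego a k z).1) : ℂ × ℂ) = _
    rw [hk, h k (Nat.lt_succ_self k)]
    rfl

lemma szego_norm_eq {z : ℂ} (hz : ‖z‖ = 1) (a : ℕ → ℂ) (n : ℕ) :
    ‖(szego a n z).1‖ = ‖(szego a n z).2‖ := by
  induction n with
  | zero => rfl
  | succ k ih =>
    set A := (szego a k z).1
    set B := (szego a k z).2
    set c := a k
    have hzsq : Complex.normSq z = 1 := by
      rw [← Complex.sq_norm, hz]; norm_num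
    have hAB : Complex.normSq A = Complex.normSq B := by
      rw [← Complex.sq_norm, ← Complex.sq_norm, ih]
    have key : Complex.normSq (z * A - (starRingEnd ℂ) c * B)
        = Complex.normSq (B - c * z * A) := by
      rw [Complex.normSq_sub, Complex.normSq_sub]
      simp only [map_mul, Complex.normSq_conj, hzsq, hAB, Complex.conj_conj]
      have hre : (B * ((starRingEnd ℂ) c * (starRingEnd ℂ) z * (starRingEnd ℂ) A)).re
          = (z * A * (c * (starRingEnd ℂ) B)).re := by
        rw [show B * ((starRingEnd ℂ) c * (starRingEnd ℂ) z * (starRingEnd ℂ) A)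
            = (starRingEnd ℂ) (z * A * (c * (starRingEnd ℂ) B)) by
          simp only [map_mul, Complex.conj_conj]; ring]
        rw [Complex.conj_re]
      rw [hre]
      ring
    show ‖z * A - (starRingEnd ℂ) c * B‖ = ‖B - c * z * A‖
    rw [Complex.norm_def, Complex.norm_def, key]

lemma szego_star_ne_zero {z : ℂ} (hz : ‖z‖ = 1) {a : ℕ → ℂ} {n : ℕ}
    (ha : ∀ j < n, ‖a j‖ < 1) : (szego a n z).2 ≠ 0 := by
  induction n with
  | zero => exact one_ne_zero
  | succ k ih =>
    have hk := ih (fun j hj => ha j (Nat.lt_succ_of_lt hj))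
    have hBpos : 0 < ‖(szego a k z).2‖ := norm_pos_iff.mpr hk
    have hAB := szego_norm_eq hz a k
    have hc : ‖a k‖ < 1 := ha k (Nat.lt_succ_self k)
    show (szego a k z).2 - a k * z * (szego a k z).1 ≠ 0
    intro hzero
    have h1 : ‖(szego a k z).2 - a k * z * (szego a k z).1‖ = 0 := by rw [hzero, norm_zero]
    have h2 : ‖(szego a k z).2‖ - ‖a k * z * (szego a k z).1‖
        ≤ ‖(szego a k z).2 - a k * z * (szego a k z).1‖ := norm_sub_norm_le _ _
    rw [norm_mul, norm_mul, hz, mul_one, ← hAB] at h2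
    nlinarith [hAB, hBpos, hc, h1, h2, norm_nonneg (szego a k z).1]

noncomputable def Xval (z : ℂ) (n : ℕ) (a : ℕ → ℂ) : ℝ :=
  (∏ j ∈ Finset.range n, (1 - ‖a j‖ ^ 2)) / ‖(szego a n z).2‖ ^ 2

lemma Xval_congr {a a' : ℕ → ℂ} {n : ℕ} (h : ∀ j < n, a j = a' j) (z : ℂ) :
    Xval z n a = Xval z n a' := by
  unfold Xval
  rw [szego_congr h z]
  congr 1
  exact Finset.prod_congr rfl fun j hj => by rw [h j (Finset.mem_range.mp hj)]

lemma Xval_nonneg {z : ℂ} {a : ℕ → ℂ} {n : ℕ} (ha : ∀ j < n, ‖a j‖ < 1) :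
    0 ≤ Xval z n a := by
  apply div_nonneg _ (by positivity)
  apply Finset.prod_nonneg
  intro j hj
  have := ha j (Finset.mem_range.mp hj)
  nlinarith [norm_nonneg (a j)]

lemma Xval_succ {z : ℂ} (hz : ‖z‖ = 1) {a : ℕ → ℂ} {n : ℕ} (ha : ∀ j < n, ‖a j‖ < 1) :
    Xval z (n + 1) a = Xval z n a *
      ((1 - ‖a n‖ ^ 2) / ‖(1:ℂ) - a n * (z * (szego a n z).1 / (szego a n z).2)‖ ^ 2) := by
  have hB : (szego a n z).2 ≠ 0 := szego_star_ne_zero hz ha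
  have hfact : (szego a (n + 1) z).2
      = (szego a n z).2 * ((1:ℂ) - a n * (z * (szego a n z).1 / (szego a n z).2)) := by
    show (szego a n z).2 - a n * z * (szego a n z).1 = _
    field_simp
  unfold Xval
  rw [Finset.prod_range_succ, hfact, norm_mul, mul_pow]
  rw [div_mul_div_comm]

lemma Qval_norm {z : ℂ} (hz : ‖z‖ = 1) {a : ℕ → ℂ} {n : ℕ} (ha : ∀ j < n, ‖a j‖ < 1) :
    ‖z * (szego a n z).1 / (szego a n z).2‖ = 1 := by
  have hB : (szego a n z).2 ≠ 0 := szego_star_ne_zero hz ha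
  rw [norm_div, norm_mul, hz, one_mul, szego_norm_eq hz a n]
  exact div_self (norm_ne_zero_iff.mpr hB)

lemma szego_measurable (z : ℂ) (n : ℕ) : Measurable fun a : ℕ → ℂ => szego a n z := by
  induction n with
  | zero => exact measurable_const
  | succ k ih =>
    have h1 : Measurable fun a : ℕ → ℂ => (szego a k z).1 := ih.fst
    have h2 : Measurable fun a : ℕ → ℂ => (szego a k z).2 := ih.snd
    have hak : Measurable fun a : ℕ → ℂ => a k := measurable_pi_apply k
    exact (((measurable_const.mul h1).sub (((continuous_star.measurable).comp hak).mul h2)).prodMk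
      (h2.sub ((hak.mul measurable_const).mul h1)))

lemma Xval_measurable (z : ℂ) (n : ℕ) : Measurable fun a : ℕ → ℂ => Xval z n a := by
  apply Measurable.div
  · apply Finset.measurable_prod
    intro j _
    exact measurable_const.sub ((measurable_pi_apply j).norm.pow_const 2)
  · exact ((szego_measurable z n).snd.norm.pow_const 2)

/-! ### Probabilistic part -/



def extFun (n : ℕ) (v : {x // x ∈ Finset.range n} → ℂ) (c : ℂ) : ℕ → ℂ :=
  fun j => if h : j ∈ Finset.range n then v ⟨j, h⟩ else c

lemma extFun_lt {n j : ℕ} (hj : j < n) (v : {x // x ∈ Finset.range n} → ℂ) (c : ℂ) :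
    extFun n v c j = v ⟨j, Finset.mem_range.mpr hj⟩ := by
  rw [extFun, dif_pos (Finset.mem_range.mpr hj)]

lemma extFun_self {n : ℕ} (v : {x // x ∈ Finset.range n} → ℂ) (c : ℂ) :
    extFun n v c n = c := by
  rw [extFun, dif_neg (by simp)]

lemma measurable_extFun (n : ℕ) :
    Measurable fun p : ({x // x ∈ Finset.range n} → ℂ) × ℂ => extFun n p.1 p.2 := by
  apply measurable_pi_lambda
  intro j
  by_cases h : j ∈ Finset.range n
  · simp only [extFun, dif_pos h]
    exact (measurable_pi_apply _).comp measurable_fst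
  · simp only [extFun, dif_neg h]
    exact measurable_snd

lemma measurable_extFun0 (n : ℕ) :
    Measurable fun v : ({x // x ∈ Finset.range n} → ℂ) => extFun n v 0 :=
  (measurable_extFun n).comp (measurable_id.prodMk measurable_const)


/-- Bernstein–Szegő density martingale: for a CβE(β) Verblunsky sequence,
`X_n = Π_{j<n}(1 − |α_j|²)/|Φ_n*(e^{iθ})|²` is an `(F_n)`-martingale, with `E[X_n] = 1`. -/
theorem cbe_bernstein_szego_martingale {Ω : Type*} {mΩ : MeasurableSpace Ω}
    (P : Measure Ω) [IsProbabilityMeasure P]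
    (β : ℝ) (hβ : 0 < β) (α : ℕ → Ω → ℂ) (hα : IsCbetaE P β α)
    (θ : ℝ) (ℱ : Filtration ℕ mΩ)
    (hℱ : ∀ n, ℱ n = ⨆ j ∈ Set.Iio n, MeasurableSpace.comap (α j) inferInstance) :
    Martingale (fun n ω => (∏ j ∈ Finset.range n, (1 - ‖α j ω‖ ^ 2)) /
        ‖szegoPhiStar (fun i => α i ω) n (Complex.exp ((θ : ℂ) * Complex.I))‖ ^ 2) ℱ P ∧
    ∀ n, ∫ ω, (∏ j ∈ Finset.range n, (1 - ‖α j ω‖ ^ 2)) /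
        ‖szegoPhiStar (fun i => α i ω) n (Complex.exp ((θ : ℂ) * Complex.I))‖ ^ 2 ∂P = 1 := by
  obtain ⟨hmeas, hind, hlaw⟩ := hα
  set z : ℂ := Complex.exp ((θ : ℂ) * Complex.I) with hzdef
  have hz : ‖z‖ = 1 := by
    rw [hzdef]
    exact Complex.norm_exp_ofReal_mul_I θ
  set X : ℕ → Ω → ℝ := fun n ω => Xval z n (fun i => α i ω) with hXdef
  set V : ∀ n : ℕ, Ω → ({x // x ∈ Finset.range n} → ℂ) :=
    fun n ω i => α i ω with hVdef
  have hVmeas : ∀ n, Measurable (V n) :=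
    fun n => measurable_pi_lambda _ fun i => hmeas i
  have hXmeas : ∀ n, Measurable (X n) :=
    fun n => (Xval_measurable z n).comp (measurable_pi_lambda _ fun i => hmeas i)
  -- a.s. all Verblunsky coefficients are in the open unit disc
  have hdisc : ∀ᵐ ω ∂P, ∀ j, ‖α j ω‖ < 1 := by
    rw [MeasureTheory.ae_all_iff]
    intro j
    have hset : MeasurableSet {w : ℂ | ¬ ‖w‖ < 1} :=
      (measurableSet_lt measurable_norm measurable_const).compl
    rw [ae_iff]
    have hpre : {ω | ¬ ‖α j ω‖ < 1} = (α j) ⁻¹' {w : ℂ | ¬ ‖w‖ < 1} := rfl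
    rw [hpre, ← Measure.map_apply (hmeas j) hset, hlaw j, verblunskyLaw,
      withDensity_apply _ hset]
    have : ∀ᵐ w ∂(volume.restrict {w : ℂ | ¬ ‖w‖ < 1}),
        ENNReal.ofReal (if ‖w‖ < 1 then (β * ((j:ℝ)+1)/2 / Real.pi)
          * (1 - ‖w‖ ^ 2) ^ (β * ((j:ℝ)+1)/2 - 1) else 0) = 0 := by
      rw [ae_restrict_iff' hset]
      refine Filter.Eventually.of_forall fun w hw => ?_
      rw [if_neg hw, ENNReal.ofReal_zero]
    rw [lintegral_congr_ae this, lintegral_zero]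
  have hb : ∀ n : ℕ, 0 < β * ((n:ℝ) + 1) / 2 := by
    intro n; positivity
  -- independence of the first n coordinates and the n-th one
  have hindep : ∀ n, IndepFun (V n) (α n) P := by
    intro n
    have hdisj : Disjoint (Finset.range n) ({n} : Finset ℕ) := by
      simp only [Finset.disjoint_left, Finset.mem_range, Finset.mem_singleton]
      omega
    have h := hind.indepFun_finset (Finset.range n) {n} hdisj hmeas
    exact h.comp measurable_id
      (measurable_pi_apply (⟨n, Finset.mem_singleton_self n⟩ : ({n} : Finset ℕ)))
  have hmap : ∀ n, P.map (fun ω => (V n ω, α n ω)) = (P.map (V n)).prod (P.map (α n)) :=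
    fun n => (indepFun_iff_map_prod_eq_prod_map_map (hVmeas n).aemeasurable
      (hmeas n).aemeasurable).mp (hindep n)
  -- the key one-step computation
  have hstep : ∀ (n : ℕ) (t : Set ({x // x ∈ Finset.range n} → ℂ)), MeasurableSet t →
      ∫⁻ ω in (V n) ⁻¹' t, ENNReal.ofReal (X (n+1) ω) ∂P
        = ∫⁻ ω in (V n) ⁻¹' t, ENNReal.ofReal (X n ω) ∂P := by
    intro n t ht
    haveI : IsProbabilityMeasure (P.map (α n)) :=
      Measure.isProbabilityMeasure_map (hmeas n).aemeasurable
    haveI : IsProbabilityMeasure (P.map (V n)) :=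
      Measure.isProbabilityMeasure_map (hVmeas n).aemeasurable
    have hW : Measurable fun ω => (V n ω, α n ω) := (hVmeas n).prodMk (hmeas n)
    set F : (({x // x ∈ Finset.range n} → ℂ) × ℂ) → ENNReal :=
      fun p => ENNReal.ofReal (Xval z (n+1) (extFun n p.1 p.2)) with hFdef
    have hFms : Measurable F :=
      ((Xval_measurable z (n+1)).comp (measurable_extFun n)).ennreal_ofReal
    set G : ({x // x ∈ Finset.range n} → ℂ) → ENNReal :=
      fun v => ENNReal.ofReal (Xval z n (extFun n v 0)) with hGdef
    have hGms : Measurable G :=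
      ((Xval_measurable z n).comp (measurable_extFun0 n)).ennreal_ofReal
    -- pointwise identifications
    have hXF : ∀ ω, ENNReal.ofReal (X (n+1) ω) = F (V n ω, α n ω) := by
      intro ω
      rw [hFdef]
      congr 1
      apply Xval_congr
      intro j hj
      rcases Nat.lt_succ_iff_lt_or_eq.mp hj with hj' | rfl
      · rw [extFun_lt hj']
      · rw [extFun_self]
    have hXG : ∀ ω, ENNReal.ofReal (X n ω) = G (V n ω) := by
      intro ω
      rw [hGdef]
      congr 1
      apply Xval_congr
      intro j hj
      rw [extFun_lt hj]
    -- rewrite both sides as integrals against image measures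
    have hLHS : ∫⁻ ω in (V n) ⁻¹' t, ENNReal.ofReal (X (n+1) ω) ∂P
        = ∫⁻ p in t ×ˢ Set.univ, F p ∂(P.map fun ω => (V n ω, α n ω)) := by
      rw [setLIntegral_map (ht.prod MeasurableSet.univ) hFms hW]
      have hpre : (fun ω => (V n ω, α n ω)) ⁻¹' (t ×ˢ Set.univ) = (V n) ⁻¹' t := by
        ext ω; simp [Set.mem_prod]
      rw [hpre]
      exact lintegral_congr fun ω => hXF ω
    rw [hLHS, hmap n, ← Measure.prod_restrict, Measure.restrict_univ]
    rw [lintegral_prod _ hFms.aemeasurable]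
    have hUmeas : MeasurableSet {v : {x // x ∈ Finset.range n} → ℂ | ∀ i, ‖v i‖ < 1} := by
      have he : {v : {x // x ∈ Finset.range n} → ℂ | ∀ i, ‖v i‖ < 1}
          = ⋂ i, {v : {x // x ∈ Finset.range n} → ℂ | ‖v i‖ < 1} := by
        ext v; simp
      rw [he]
      exact MeasurableSet.iInter fun i =>
        measurableSet_lt ((measurable_pi_apply i).norm) measurable_const
    have hU : ∀ᵐ v ∂(P.map (V n)), ∀ i, ‖v i‖ < 1 := by
      rw [MeasureTheory.ae_map_iff (hVmeas n).aemeasurable hUmeas]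
      exact hdisc.mono fun ω hω i => hω i
    have hinner : ∀ v : {x // x ∈ Finset.range n} → ℂ, (∀ i, ‖v i‖ < 1) →
        ∫⁻ c, F (v, c) ∂(P.map (α n)) = G v := by
      intro v hv
      have hav : ∀ (c : ℂ) (j : ℕ), j < n → ‖extFun n v c j‖ < 1 := by
        intro c j hj; rw [extFun_lt hj]; exact hv _
      set q : ℂ := z * (szego (extFun n v 0) n z).1 / (szego (extFun n v 0) n z).2 with hqdef
      have hq : ‖q‖ = 1 := Qval_norm hz (hav 0)
      have hXnn : 0 ≤ Xval z n (extFun n v 0) := Xval_nonneg (hav 0)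
      have hagree : ∀ c : ℂ, ∀ j < n, extFun n v c j = extFun n v 0 j := by
        intro c j hj; rw [extFun_lt hj, extFun_lt hj]
      have hval : ∀ c : ℂ, F (v, c)
          = G v * ENNReal.ofReal ((1 - ‖c‖ ^ 2) / ‖(1:ℂ) - c * q‖ ^ 2) := by
        intro c
        show ENNReal.ofReal (Xval z (n+1) (extFun n v c)) = _
        rw [Xval_succ hz (hav c)]
        rw [Xval_congr (hagree c) z, szego_congr (hagree c) z, extFun_self, ← hqdef]
        rw [ENNReal.ofReal_mul hXnn]
      rw [lintegral_congr fun c => hval c]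
      have hmr : Measurable fun c : ℂ =>
          ENNReal.ofReal ((1 - ‖c‖ ^ 2) / ‖(1:ℂ) - c * q‖ ^ 2) :=
        ((measurable_const.sub (measurable_norm.pow_const 2)).div
          (((measurable_const.sub (measurable_id.mul_const q)).norm).pow_const 2)).ennreal_ofReal
      rw [lintegral_const_mul _ hmr, hlaw n, verblunsky_lintegral (hb n) hq, mul_one]
    calc ∫⁻ v, (∫⁻ c, F (v, c) ∂(P.map (α n))) ∂((P.map (V n)).restrict t)
        = ∫⁻ v, G v ∂((P.map (V n)).restrict t) :=
          lintegral_congr_ae ((ae_restrict_of_ae hU).mono fun v hv => hinner v hv)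
      _ = ∫⁻ ω in (V n) ⁻¹' t, ENNReal.ofReal (X n ω) ∂P := by
          rw [setLIntegral_map ht hGms (hVmeas n)]
          exact lintegral_congr fun ω => (hXG ω).symm
  -- total mass one, by induction
  have hlint : ∀ n, ∫⁻ ω, ENNReal.ofReal (X n ω) ∂P = 1 := by
    intro n
    induction n with
    | zero =>
      have hX0 : ∀ ω, X 0 ω = 1 := by
        intro ω
        show Xval z 0 _ = 1
        unfold Xval
        simp [szego]
      simp only [hX0, ENNReal.ofReal_one, lintegral_one, measure_univ]
    | succ k ih =>
      have h := hstep k Set.univ MeasurableSet.univ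
      rw [Set.preimage_univ, Measure.restrict_univ] at h
      rw [h, ih]
  -- nonnegativity
  have hXnn : ∀ n, 0 ≤ᵐ[P] X n :=
    fun n => hdisc.mono fun ω hω => Xval_nonneg fun j _ => hω j
  -- integrability
  have hXint : ∀ n, Integrable (X n) P := by
    intro n
    refine ⟨(hXmeas n).aestronglyMeasurable, ?_⟩
    rw [hasFiniteIntegral_iff_ofReal (hXnn n), hlint n]
    exact ENNReal.one_lt_top
  -- expectation one
  have hXexp : ∀ n, ∫ ω, X n ω ∂P = 1 := by
    intro n
    rw [integral_eq_lintegral_of_nonneg_ae (hXnn n) (hXmeas n).aestronglyMeasurable, hlint n]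
    simp
  -- identification of the filtration
  have hcomap : ∀ n, (ℱ n : MeasurableSpace Ω)
      = MeasurableSpace.comap (V n) MeasurableSpace.pi := by
    intro n
    rw [hℱ n]
    have hpi : (MeasurableSpace.pi : MeasurableSpace ({x // x ∈ Finset.range n} → ℂ))
        = ⨆ i : {x // x ∈ Finset.range n},
            MeasurableSpace.comap (fun v : {x // x ∈ Finset.range n} → ℂ => v i)
              inferInstance := rfl
    rw [hpi, MeasurableSpace.comap_iSup]
    have hcc : ∀ i : {x // x ∈ Finset.range n},
        (MeasurableSpace.comap (fun v : {x // x ∈ Finset.range n} → ℂ => v i)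
            inferInstance).comap (V n)
          = MeasurableSpace.comap (α i) inferInstance := by
      intro i
      rw [MeasurableSpace.comap_comp]
      rfl
    rw [iSup_congr hcc]
    apply le_antisymm
    · refine iSup₂_le fun j hj => ?_
      exact le_iSup_of_le (⟨j, Finset.mem_range.mpr hj⟩ : {x // x ∈ Finset.range n}) le_rfl
    · refine iSup_le fun i => ?_
      exact le_iSup₂_of_le (i : ℕ) (Set.mem_Iio.mpr (Finset.mem_range.mp i.2)) le_rfl
  -- strong measurability w.r.t. the filtration
  have hGrep : ∀ n ω, X n ω = Xval z n (extFun n (V n ω) 0) := by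
    intro n ω
    exact Xval_congr (fun j hj => (extFun_lt hj (V n ω) 0).symm) z
  have hsm : ∀ n, StronglyMeasurable[ℱ n] (X n) := by
    intro n
    have hVF : Measurable[ℱ n] (V n) := by
      apply Measurable.of_comap_le
      rw [hcomap n]
    have : Measurable[ℱ n] (X n) := by
      have hcomp : X n = (fun v => Xval z n (extFun n v 0)) ∘ V n :=
        funext fun ω => hGrep n ω
      rw [hcomp]
      exact ((Xval_measurable z n).comp (measurable_extFun0 n)).comp hVF
    exact this.stronglyMeasurable
  -- set-integral equality
  have hsetint : ∀ n (s : Set Ω), MeasurableSet[ℱ n] s →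
      ∫ ω in s, X (n+1) ω ∂P = ∫ ω in s, X n ω ∂P := by
    intro n s hs
    rw [hcomap n] at hs
    obtain ⟨t, ht, rfl⟩ := MeasurableSpace.measurableSet_comap.mp hs
    rw [integral_eq_lintegral_of_nonneg_ae (ae_restrict_of_ae (hXnn (n+1)))
      ((hXmeas (n+1)).aestronglyMeasurable.restrict),
      integral_eq_lintegral_of_nonneg_ae (ae_restrict_of_ae (hXnn n))
      ((hXmeas n).aestronglyMeasurable.restrict), hstep n t ht]
  -- conditional expectation property
  have hcond : ∀ n, X n =ᵐ[P] P[X (n+1) | ℱ n] := by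
    intro n
    exact ae_eq_condExp_of_forall_setIntegral_eq (ℱ.le n) (hXint (n+1))
      (fun s _ _ => (hXint n).integrableOn)
      (fun s hs _ => (hsetint n s hs).symm)
      ⟨X n, hsm n, Filter.EventuallyEq.rfl⟩
  constructor
  · exact martingale_nat (fun n => hsm n) (fun n => hXint n) hcond
  · exact fun n => hXexp n


end CbeAux
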